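/- Let X and Y be persistence modules over a field K with bases B_X = {x_1,…,x_N} and B_Y^{old} = {y_1,…,y_N} such that |birth(x_i) − birth(y_i)| < ε and |death(x_i) − death(y_i)| < ε for all i, and such that every interval of X and of Y has length greater than 2ε. Let α : X → Y be an ε-morphism, let k ≠ l be indices with birth(x_l) + ε < death(y_k), and let λ ∈ K. If the matrix Mat_{B_X}^{B_Y^{old}}(α) · e_{lk}^{−λ} is a basis transformation matrix for Y with respect to B_Y^{old}, and B_Y^{new} is the corresponding transformed basis, then Mat_{B_X}^{B_Y^{new}}(α) = e_{lk}^{λ}. -/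

import Mathlib

open scoped BigOperators

universe u v

/-- A persistence module over a field `K`. -/
structure PersistenceModule (K : Type u) [Field K] where
  space : ℝ → Type v
  [instAdd : ∀ t, AddCommGroup (space t)]
  [instMod : ∀ t, Module K (space t)]
  trans : ∀ s t : ℝ, s ≤ t → (space s →ₗ[K] space t)
  trans_self : ∀ (t : ℝ) (h : t ≤ t), trans t t h = LinearMap.id
  trans_trans : ∀ (r s t : ℝ) (hrs : r ≤ s) (hst : s ≤ t) (x : space r),
      trans s t hst (trans r s hrs x) = trans r t (hrs.trans hst) x

attribute [instance] PersistenceModule.instAdd PersistenceModule.instMod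

namespace PersistenceModule

variable {K : Type u} [Field K]

/-- `x ∈ X_t` is born at `t` if it is not in the image of any earlier transition map. -/
def BornAt (X : PersistenceModule K) (t : ℝ) (x : X.space t) : Prop :=
  ∀ (s : ℝ) (h : s < t), x ∉ Set.range (X.trans s t h.le)

/-- The death time of an element `x ∈ X_t`. -/
noncomputable def death (X : PersistenceModule K) (t : ℝ) (x : X.space t) : ℝ :=
  sInf {s : ℝ | ∃ h : t < s, X.trans t s h.le x = 0}

/-- `x` is a basis of `X` realizing the intervals `[b i, d i)`. -/
def IsBasisFamily {ι : Type*} (X : PersistenceModule K) (b d : ι → ℝ)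
    (x : ∀ i, X.space (b i)) : Prop :=
  (∀ i, X.BornAt (b i) (x i)) ∧
  (∀ i, X.death (b i) (x i) = d i) ∧
  (∀ t : ℝ,
    LinearIndependent K
      (fun i : {i : ι // b i ≤ t ∧ t < d i} => X.trans (b i.1) t i.2.1 (x i.1)) ∧
    Submodule.span K (Set.range
      (fun i : {i : ι // b i ≤ t ∧ t < d i} => X.trans (b i.1) t i.2.1 (x i.1))) = ⊤)

open scoped Classical in
/-- The image of the basis element `x j` at height `h` (or `0` if not yet born). -/
noncomputable def pushTo {ι : Type*} (X : PersistenceModule K) (b : ι → ℝ)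
    (x : ∀ i, X.space (b i)) (h : ℝ) (j : ι) : X.space h :=
  if hb : b j ≤ h then X.trans (b j) h hb (x j) else 0

end PersistenceModule

/-- An `ε`-morphism of persistence modules. -/
structure EpsMorphism {K : Type u} [Field K] (X Y : PersistenceModule K) (ε : ℝ) where
  maps : ∀ r r' : ℝ, r + ε = r' → (X.space r →ₗ[K] Y.space r')
  comm : ∀ (s t s' t' : ℝ) (hs : s + ε = s') (ht : t + ε = t') (hst : s ≤ t)
      (x : X.space s),
    maps t t' ht (X.trans s t hst x) = Y.trans s' t' (by linarith) (maps s s' hs x)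

/-- A pair of `ε`-morphisms forming an `ε`-interleaving. -/
def IsInterleaving {K : Type u} [Field K] (X Y : PersistenceModule K) (ε : ℝ)
    (F : EpsMorphism X Y ε) (G : EpsMorphism Y X ε) : Prop :=
  (∀ (r r'' : ℝ) (h : r + ε + ε = r'') (hr : r ≤ r'') (x : X.space r),
      G.maps (r + ε) r'' (by linarith) (F.maps r (r + ε) rfl x) = X.trans r r'' hr x) ∧
  (∀ (r r'' : ℝ) (h : r + ε + ε = r'') (hr : r ≤ r'') (y : Y.space r),
      F.maps (r + ε) r'' (by linarith) (G.maps r (r + ε) rfl y) = Y.trans r r'' hr y)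

/-- `A` is the matrix of the `ε`-morphism `α` with respect to the bases `x` of `X`
(realizing `[bX i, dX i)`) and `y` of `Y` (realizing `[bY j, dY j)`). -/
def IsMatrixOf {K : Type u} [Field K] {X Y : PersistenceModule K} {ε : ℝ}
    {N M : ℕ} (α : EpsMorphism X Y ε)
    (bX dX : Fin N → ℝ) (x : ∀ i, X.space (bX i))
    (bY dY : Fin M → ℝ) (y : ∀ j, Y.space (bY j))
    (A : Matrix (Fin M) (Fin N) K) : Prop :=
  (∀ i, α.maps (bX i) (bX i + ε) rfl (x i)
      = ∑ j, A j i • Y.pushTo bY y (bX i + ε) j) ∧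
  (∀ (j : Fin M) (i : Fin N), ¬ (bY j ≤ bX i + ε ∧ bX i + ε < dY j) → A j i = 0)

/-- A basis transformation matrix. -/
def IsBasisTransformMatrix {K : Type u} [Field K] {N : ℕ} (b d : Fin N → ℝ)
    (A : Matrix (Fin N) (Fin N) K) : Prop :=
  (∀ i, A i i ≠ 0) ∧ ∀ j i, A j i ≠ 0 → b j ≤ b i ∧ d j ≤ d i

/-- The transformed family `A(B)`: `x_i^new = ∑ j A j i • φ(x_j)`. -/
noncomputable def transformBasis {K : Type u} [Field K] {N : ℕ} (X : PersistenceModule K)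
    (b : Fin N → ℝ) (x : ∀ i, X.space (b i)) (A : Matrix (Fin N) (Fin N) K)
    (i : Fin N) : X.space (b i) :=
  ∑ j, A j i • X.pushTo b x (b i) j

/-- The elementary matrix `e_{lk}^μ`: identity with extra entry `μ` in position `(k, l)`. -/
def eMat {K : Type u} [Field K] {N : ℕ} (l k : Fin N) (μ : K) : Matrix (Fin N) (Fin N) K :=
  1 + Matrix.single k l μ


section Aux

variable {K : Type u} [Field K] {N : ℕ}

lemma eMat_apply (l k : Fin N) (mu : K) (j i : Fin N) :
    eMat l k mu j i = (if j = i then (1 : K) else 0) + (if j = k ∧ i = l then mu else 0) := by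
  simp [eMat, Matrix.one_apply, Matrix.single, Matrix.add_apply, and_comm, eq_comm]

lemma eMat_inv (l k : Fin N) (hkl : k ≠ l) (mu : K) :
    eMat l k (-mu) * eMat l k mu = 1 := by
  unfold eMat
  rw [add_mul, mul_add, mul_add, Matrix.one_mul, Matrix.one_mul, Matrix.mul_one]
  have h0 : Matrix.single k l (-mu) * Matrix.single k l mu = 0 :=
    Matrix.single_mul_single_of_ne (c := -mu) k l k (Ne.symm hkl) mu
  rw [h0, add_zero, add_assoc, ← Matrix.single_add]
  simp

end Aux

/-- Under the same proximity and length hypotheses as before, if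
`Mat(α) · e_{lk}^{-λ}` is a basis transformation matrix for `Y` and `birth(x_l)+ε < death(y_k)`,
then with respect to the transformed basis the matrix of `α` is the elementary matrix
`e_{lk}^{λ}`. -/
theorem statement4 {K : Type u} [Field K] {N : ℕ}
    (X Y : PersistenceModule K) (ε : ℝ) (hε : 0 ≤ ε)
    (bX dX bY dY : Fin N → ℝ)
    (x : ∀ i, X.space (bX i)) (y : ∀ i, Y.space (bY i))
    (hbdX : ∀ i, bX i < dX i) (hbdY : ∀ i, bY i < dY i)
    (hdistX : Function.Injective fun i => (bX i, dX i))
    (hdistY : Function.Injective fun i => (bY i, dY i))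
    (hX : X.IsBasisFamily bX dX x) (hY : Y.IsBasisFamily bY dY y)
    (hb : ∀ i, |bX i - bY i| < ε) (hd : ∀ i, |dX i - dY i| < ε)
    (hlenX : ∀ i, 2 * ε < dX i - bX i) (hlenY : ∀ i, 2 * ε < dY i - bY i)
    (k l : Fin N) (hkl : k ≠ l) (lam : K)
    (hlk : bX l + ε < dY k)
    (α : EpsMorphism X Y ε)
    (A : Matrix (Fin N) (Fin N) K)
    (hA : IsMatrixOf α bX dX x bY dY y A)
    (hAtrans : IsBasisTransformMatrix bY dY (A * eMat l k (-lam))) :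
    IsMatrixOf α bX dX x bY dY (transformBasis Y bY y (A * eMat l k (-lam)))
      (eMat l k lam) := by
  classical
  set B := A * eMat l k (-lam) with hBdef
  have hAE : B * eMat l k lam = A := by
    rw [hBdef, Matrix.mul_assoc, eMat_inv l k hkl, Matrix.mul_one]
  -- basic interval facts
  have hF1 : ∀ i, bY i ≤ bX i + ε ∧ bX i + ε < dY i := by
    intro i
    have h1 := abs_lt.mp (hb i)
    have h2 := abs_lt.mp (hd i)
    have h3 := hlenX i
    constructor <;> [linarith [h1.1]; linarith [h2.1]]
  -- entries of B
  have hBent : ∀ j i, B j i = A j i + (if i = l then A j k * (-lam) else 0) := by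
    intro j i
    rw [hBdef, Matrix.mul_apply]
    simp only [eMat_apply, mul_add, Finset.sum_add_distrib, mul_ite, mul_one, mul_zero]
    congr 1
    · simp
    · by_cases hil : i = l
      · subst hil
        simp [Finset.sum_ite_eq' Finset.univ k fun m => A j m * (-lam)]
      · simp [hil]
  have hBkk : B k k = A k k := by
    rw [hBent, if_neg hkl, add_zero]
  have hAkk : A k k ≠ 0 := hBkk ▸ hAtrans.1 k
  -- key fact
  have hkey : lam ≠ 0 → bY k ≤ bX l + ε := by
    intro hlam
    by_cases hBkl : B k l = 0
    · have hAkl : A k l ≠ 0 := by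
        intro h0
        rw [hBent, h0, zero_add, if_pos rfl, mul_neg, neg_eq_zero, mul_eq_zero] at hBkl
        rcases hBkl with h | h
        · exact hAkk h
        · exact hlam h
      by_contra hcon
      exact hAkl (hA.2 k l (fun hc => hcon hc.1))
    · have h1 := (hAtrans.2 k l hBkl).1
      have h2 := (hF1 l).1
      linarith
  constructor
  · intro i
    rw [hA.1 i]
    -- pushforward of new basis elements
    have hpush : ∀ j : Fin N, bY j ≤ bX i + ε →
        Y.pushTo bY (transformBasis Y bY y B) (bX i + ε) j
          = ∑ m, B m j • Y.pushTo bY y (bX i + ε) m := by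
      intro j hj
      rw [PersistenceModule.pushTo, dif_pos hj, transformBasis, map_sum]
      refine Finset.sum_congr rfl fun m _ => ?_
      rw [map_smul]
      by_cases hBmj : B m j = 0
      · rw [hBmj, zero_smul, zero_smul]
      · have hmj : bY m ≤ bY j := (hAtrans.2 m j hBmj).1
        congr 1
        rw [PersistenceModule.pushTo, dif_pos hmj, PersistenceModule.pushTo,
          dif_pos (hmj.trans hj), Y.trans_trans]
    have hterm : ∀ j : Fin N,
        eMat l k lam j i • Y.pushTo bY (transformBasis Y bY y B) (bX i + ε) j
          = ∑ m, (B m j * eMat l k lam j i) • Y.pushTo bY y (bX i + ε) m := by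
      intro j
      by_cases hE : eMat l k lam j i = 0
      · simp [hE]
      · have hj : bY j ≤ bX i + ε := by
          rcases eq_or_ne j i with rfl | hji
          · exact (hF1 j).1
          · have hjk : j = k ∧ i = l := by
              by_contra hc
              exact hE (by rw [eMat_apply, if_neg hji, if_neg hc, add_zero])
            have hlam : lam ≠ 0 := by
              intro h0
              exact hE (by rw [eMat_apply, if_neg hji, hjk.1, hjk.2, if_pos ⟨rfl, rfl⟩, h0,
                add_zero])
            rw [hjk.1, hjk.2]
            exact hkey hlam
        rw [hpush j hj, Finset.smul_sum]
        refine Finset.sum_congr rfl fun m _ => ?_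
        rw [smul_smul, mul_comm]
    rw [Finset.sum_congr rfl fun j _ => hterm j, Finset.sum_comm]
    refine (Finset.sum_congr rfl fun m _ => ?_).symm
    rw [← Finset.sum_smul]
    congr 1
    rw [← hAE, Matrix.mul_apply]
  · intro j i hcond
    rw [eMat_apply]
    rcases eq_or_ne j i with rfl | hji
    · exact absurd (hF1 _) hcond
    · rw [if_neg hji]
      by_cases hjk : j = k ∧ i = l
      · rw [if_pos hjk, zero_add]
        by_contra hlam
        refine hcond ?_
        rw [hjk.1, hjk.2]
        exact ⟨hkey hlam, hlk⟩
      · rw [if_neg hjk, add_zero]
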